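/- Let n ≥ 2 be an integer and λ₊(n) = (3/(n+2))·(1 − √((n−1)/(3(n+1)))). Then for all λ with 1/(n+1) ≤ λ ≤ λ₊(n): p_0(n,λ) ≤ p_1(n,λ) ≤ … ≤ p_{n−1}(n,λ), p_{n−1}(n,λ) ≥ p_n(n,λ), and p_n(n,λ) ≤ p_{n+1}(n,λ). -/

import Mathlib

/-- The output distribution `p(n,λ)` of the general attenuator with Fock environment `|n⟩`,
for `ℓ = 0, …, n+1` (the case `ℓ = n+1` is the continuous extension of the formula
`… · λ^(n-ℓ) · …`, which involves `λ⁻¹`, valid for all `λ ∈ (0,1)`). -/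
noncomputable def pdist (n ℓ : ℕ) (t : ℝ) : ℝ :=
  if ℓ ≤ n then
    1 / (2 * ((n : ℝ) + 1) * (1 - t)) * ((n + 1).choose ℓ : ℝ) * (1 - t) ^ ℓ * t ^ (n - ℓ) *
      ((1 - t) * ((n : ℝ) - (ℓ : ℝ) + 1) + (((n : ℝ) + 1) * (1 - t) - (ℓ : ℝ)) ^ 2)
  else ((n : ℝ) + 1) * t * (1 - t) ^ n / 2

/-- The output distribution `q(n,λ)` (spectrum of the joint output state). -/
noncomputable def qdist (n ℓ : ℕ) (t : ℝ) : ℝ :=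
  if ℓ ≤ n then
    1 / (2 * ((n : ℝ) + 1) * (1 - t)) * ((n + 1).choose ℓ : ℝ) * (1 - t) ^ ℓ * t ^ (n - ℓ) *
      (t * (ℓ : ℝ) + (((n : ℝ) + 1) * (1 - t) - (ℓ : ℝ)) ^ 2)
  else (1 - t) ^ n * (1 + ((n : ℝ) + 1) * t) / 2

/-- The threshold . -/
noncomputable def lamPlus (n : ℕ) : ℝ :=
  3 / ((n : ℝ) + 2) * (1 - Real.sqrt (((n : ℝ) - 1) / (3 * ((n : ℝ) + 1))))


set_option maxHeartbeats 1000000 in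
private
lemma keyD (x l t : ℝ) (hx : 2 ≤ x) (hl : 0 ≤ l) (hlx : l + 2 ≤ x)
    (hy : 1 ≤ (x + 1) * t) (ht : 0 < t) (hw : 0 ≤ 3 - (x + 2) * t)
    (hQ : 3 * (x - 1) ≤ (x + 1) * (3 - (x + 2) * t) ^ 2) :
    (l + 1) * t * ((1 - t) * (x - l + 1) + ((x + 1) * (1 - t) - l) ^ 2) ≤
      (x + 1 - l) * ((1 - t) * ((1 - t) * (x - l) + ((x + 1) * (1 - t) - (l + 1)) ^ 2)) := by
  have hx0 : (0:ℝ) ≤ x := by linarith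
  have h32 : 2 * (x + 1) * t ≤ 3 := by
    by_contra hc
    push_neg at hc
    have ha : 0 < 3 * x - 2 * (x + 1) * (3 - (x + 2) * t) := by nlinarith
    have hb : 0 < 3 * x + 2 * (x + 1) * (3 - (x + 2) * t) := by nlinarith
    nlinarith [mul_pos ha hb, mul_le_mul_of_nonneg_left hQ (show (0:ℝ) ≤ 4 * (x + 1) by linarith)]
  have hv : 0 ≤ 3 - 2 * (x + 1) * t := by linarith
  have hnum : (x + 1) ^ 2 * 0 ≤ (x + 1) ^ 2 *
      (21 - 17 * t + 4 * t ^ 2 - 17 * x * t + 7 * x * t ^ 2 + 3 * x ^ 2 * t ^ 2) := by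
    nlinarith [hv, sq_nonneg (3 - 2 * (x + 1) * t), mul_nonneg hx0 hv,
      mul_nonneg hx0 (sq_nonneg (3 - 2 * (x + 1) * t)),
      mul_nonneg (mul_nonneg hx0 hx0) hv,
      mul_nonneg (mul_nonneg hx0 hx0) (sq_nonneg (3 - 2 * (x + 1) * t)),
      mul_nonneg hx0 hx0]
  have hRn2 : 0 ≤ 21 - 17 * t + 4 * t ^ 2 - 17 * x * t + 7 * x * t ^ 2 + 3 * x ^ 2 * t ^ 2 :=
    le_of_mul_le_mul_left hnum (by positivity)
  have hsub : 0 ≤ x - 2 - l := by linarith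
  have hfac : 0 ≤ x + 6 - l - 3 * (x + 1) * t := by linarith
  have hR : 0 ≤ 9 - 11 * t + 4 * t ^ 2 - 4 * l + 3 * l * t + l ^ 2 + 4 * x - 14 * x * t
      + 7 * x * t ^ 2 - 2 * x * l + 3 * x * l * t + x ^ 2 - 3 * x ^ 2 * t + 3 * x ^ 2 * t ^ 2 := by
    nlinarith [hRn2, mul_nonneg hsub hfac]
  have hQp : 0 ≤ ((x + 1) * (3 - (x + 2) * t) ^ 2 - 3 * (x - 1)) * (3 - (x + 1) * t) :=
    mul_nonneg (by linarith) (by linarith)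
  have h6 : 0 ≤ (x + 2) * ((x - 2 - l) * (9 - 11 * t + 4 * t ^ 2 - 4 * l + 3 * l * t + l ^ 2
      + 4 * x - 14 * x * t + 7 * x * t ^ 2 - 2 * x * l + 3 * x * l * t + x ^ 2 - 3 * x ^ 2 * t
      + 3 * x ^ 2 * t ^ 2)) := mul_nonneg (by linarith) (mul_nonneg hsub hR)
  have h7 : (x + 2) * 0 ≤ (x + 2) *
      ((x + 1 - l) * ((1 - t) * ((1 - t) * (x - l) + ((x + 1) * (1 - t) - (l + 1)) ^ 2))
        - (l + 1) * t * ((1 - t) * (x - l + 1) + ((x + 1) * (1 - t) - l) ^ 2)) := by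
    have h8 := add_nonneg hQp h6
    rw [mul_zero]
    calc (0:ℝ) ≤ ((x + 1) * (3 - (x + 2) * t) ^ 2 - 3 * (x - 1)) * (3 - (x + 1) * t)
        + (x + 2) * ((x - 2 - l) * (9 - 11 * t + 4 * t ^ 2 - 4 * l + 3 * l * t + l ^ 2
        + 4 * x - 14 * x * t + 7 * x * t ^ 2 - 2 * x * l + 3 * x * l * t + x ^ 2 - 3 * x ^ 2 * t
        + 3 * x ^ 2 * t ^ 2)) := h8
      _ = (x + 2) *
        ((x + 1 - l) * ((1 - t) * ((1 - t) * (x - l) + ((x + 1) * (1 - t) - (l + 1)) ^ 2))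
          - (l + 1) * t * ((1 - t) * (x - l + 1) + ((x + 1) * (1 - t) - l) ^ 2)) := by ring
  have h9 := le_of_mul_le_mul_left h7 (show (0:ℝ) < x + 2 by linarith)
  linarith

set_option maxHeartbeats 1000000 in
theorem pdist_partially_sorted (n : ℕ) (hn : 2 ≤ n) (t : ℝ)
    (h1 : 1 / ((n : ℝ) + 1) ≤ t) (h2 : t ≤ lamPlus n) :
    (∀ ℓ : ℕ, ℓ + 1 ≤ n - 1 → pdist n ℓ t ≤ pdist n (ℓ + 1) t) ∧
    pdist n n t ≤ pdist n (n - 1) t ∧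
    pdist n n t ≤ pdist n (n + 1) t := by
  set x : ℝ := (n : ℝ) with hxdef
  have hx : (2:ℝ) ≤ x := by rw [hxdef]; exact_mod_cast hn
  have hx1 : (0:ℝ) < x + 1 := by linarith
  have ht : 0 < t := lt_of_lt_of_le (by positivity) h1
  have hy : 1 ≤ (x + 1) * t := by
    have h := mul_le_mul_of_nonneg_left h1 hx1.le
    rwa [mul_one_div, div_self (by linarith)] at h
  -- consequences of t ≤ lamPlus n
  have hr : 0 ≤ (x - 1) / (3 * (x + 1)) := div_nonneg (by linarith) (by linarith)
  have hsq := Real.sqrt_nonneg ((x - 1) / (3 * (x + 1)))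
  have h2' : (x + 2) * t ≤ 3 * (1 - Real.sqrt ((x - 1) / (3 * (x + 1)))) := by
    rw [lamPlus] at h2
    have hx2 : (0:ℝ) < x + 2 := by linarith
    calc (x + 2) * t ≤ (x + 2) * (3 / (x + 2) * (1 - Real.sqrt ((x - 1) / (3 * (x + 1))))) :=
          mul_le_mul_of_nonneg_left h2 hx2.le
      _ = 3 / (x + 2) * (x + 2) * (1 - Real.sqrt ((x - 1) / (3 * (x + 1)))) := by ring
      _ = 3 * (1 - Real.sqrt ((x - 1) / (3 * (x + 1)))) := by
            rw [div_mul_cancel₀ _ (ne_of_gt hx2)]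
  have hge : 3 * Real.sqrt ((x - 1) / (3 * (x + 1))) ≤ 3 - (x + 2) * t := by linarith
  have hw : 0 ≤ 3 - (x + 2) * t := le_trans (by positivity) hge
  have hss : Real.sqrt ((x - 1) / (3 * (x + 1))) ^ 2 = (x - 1) / (3 * (x + 1)) :=
    Real.sq_sqrt hr
  have hQ : 3 * (x - 1) ≤ (x + 1) * (3 - (x + 2) * t) ^ 2 := by
    have h9 : (3 * Real.sqrt ((x - 1) / (3 * (x + 1)))) ^ 2 ≤ (3 - (x + 2) * t) ^ 2 :=
      pow_le_pow_left₀ (by positivity) hge 2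
    have h10 : 9 * ((x - 1) / (3 * (x + 1))) ≤ (3 - (x + 2) * t) ^ 2 := by
      calc 9 * ((x - 1) / (3 * (x + 1)))
          = 3 ^ 2 * (Real.sqrt ((x - 1) / (3 * (x + 1))) ^ 2) := by rw [hss]; ring
        _ = (3 * Real.sqrt ((x - 1) / (3 * (x + 1)))) ^ 2 := by ring
        _ ≤ _ := h9
    have h11 := mul_le_mul_of_nonneg_left h10 hx1.le
    calc 3 * (x - 1) = (x + 1) * (9 * ((x - 1) / (3 * (x + 1)))) := by
          field_simp
          ring
      _ ≤ _ := h11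
  have h22 : (x + 2) * t ≤ 2 := by
    by_contra hc
    push_neg at hc
    have h1mw : (0:ℝ) ≤ 1 - (3 - (x + 2) * t) := by linarith
    nlinarith [hQ, mul_nonneg (mul_nonneg hx1.le hw) h1mw, mul_pos hx1 (show 0 < (x+2)*t - 2 by linarith)]
  have hs : 0 < 1 - t := by
    nlinarith [mul_nonneg (show (0:ℝ) ≤ x - 2 by linarith) ht.le]
  refine ⟨?_, ?_, ?_⟩
  · intro ℓ hℓ
    have hl0 : ℓ ≤ n := by omega
    have hl1 : ℓ + 1 ≤ n := by omega
    have hLx : (ℓ:ℝ) + 2 ≤ x := by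
      rw [hxdef]
      exact_mod_cast (show ℓ + 2 ≤ n by omega)
    have key := keyD x (ℓ:ℝ) t hx (by positivity) hLx hy ht hw hQ
    have hpow : t ^ (n - ℓ) = t ^ (n - (ℓ+1)) * t := by
      rw [show n - ℓ = (n - (ℓ+1)) + 1 by omega, pow_succ]
    rw [pdist, pdist, if_pos hl0, if_pos hl1, hpow]
    push_cast
    rw [← hxdef]
    have hL1 : (0:ℝ) < (ℓ:ℝ) + 1 := by positivity
    have hC : (((n + 1).choose (ℓ + 1)) : ℝ) * ((ℓ:ℝ) + 1)
        = (((n + 1).choose ℓ) : ℝ) * (x + 1 - (ℓ:ℝ)) := by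
      have h := Nat.choose_succ_right_eq (n + 1) ℓ
      have h' := congrArg (Nat.cast (R := ℝ)) h
      push_cast [Nat.cast_sub (show ℓ ≤ n + 1 by omega)] at h'
      rw [hxdef]; linarith
    have hC0 : (0:ℝ) ≤ ((n + 1).choose ℓ : ℝ) := by positivity
    have hpos : (0:ℝ) ≤ 1 / (2 * (x + 1) * (1 - t)) * ((1 - t) ^ ℓ * t ^ (n - (ℓ + 1))) := by
      positivity
    have hinner : ((n + 1).choose ℓ : ℝ) *
        (t * ((1 - t) * (x - (ℓ:ℝ) + 1) + ((x + 1) * (1 - t) - (ℓ:ℝ)) ^ 2)) ≤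
        ((n + 1).choose (ℓ + 1) : ℝ) *
        ((1 - t) * ((1 - t) * (x - ((ℓ:ℝ) + 1) + 1) + ((x + 1) * (1 - t) - ((ℓ:ℝ) + 1)) ^ 2)) := by
      rw [← mul_le_mul_iff_right₀ hL1]
      calc ((ℓ:ℝ) + 1) * (((n + 1).choose ℓ : ℝ) *
            (t * ((1 - t) * (x - (ℓ:ℝ) + 1) + ((x + 1) * (1 - t) - (ℓ:ℝ)) ^ 2)))
          = ((n + 1).choose ℓ : ℝ) *
            (((ℓ:ℝ) + 1) * t * ((1 - t) * (x - (ℓ:ℝ) + 1) + ((x + 1) * (1 - t) - (ℓ:ℝ)) ^ 2)) := by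
            ring
        _ ≤ ((n + 1).choose ℓ : ℝ) *
            ((x + 1 - (ℓ:ℝ)) * ((1 - t) * ((1 - t) * (x - (ℓ:ℝ))
              + ((x + 1) * (1 - t) - ((ℓ:ℝ) + 1)) ^ 2))) := mul_le_mul_of_nonneg_left key hC0
        _ = ((ℓ:ℝ) + 1) * (((n + 1).choose (ℓ + 1) : ℝ) *
            ((1 - t) * ((1 - t) * (x - ((ℓ:ℝ) + 1) + 1)
              + ((x + 1) * (1 - t) - ((ℓ:ℝ) + 1)) ^ 2))) := by
            linear_combination (-((1 - t) * ((1 - t) * (x - (ℓ:ℝ))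
              + ((x + 1) * (1 - t) - ((ℓ:ℝ) + 1)) ^ 2))) * hC
    calc 1 / (2 * (x + 1) * (1 - t)) * ((n + 1).choose ℓ : ℝ) * (1 - t) ^ ℓ *
          (t ^ (n - (ℓ + 1)) * t) *
          ((1 - t) * (x - (ℓ:ℝ) + 1) + ((x + 1) * (1 - t) - (ℓ:ℝ)) ^ 2)
        = (1 / (2 * (x + 1) * (1 - t)) * ((1 - t) ^ ℓ * t ^ (n - (ℓ + 1)))) *
          (((n + 1).choose ℓ : ℝ) *
            (t * ((1 - t) * (x - (ℓ:ℝ) + 1) + ((x + 1) * (1 - t) - (ℓ:ℝ)) ^ 2))) := by ring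
      _ ≤ (1 / (2 * (x + 1) * (1 - t)) * ((1 - t) ^ ℓ * t ^ (n - (ℓ + 1)))) *
          (((n + 1).choose (ℓ + 1) : ℝ) *
            ((1 - t) * ((1 - t) * (x - ((ℓ:ℝ) + 1) + 1)
              + ((x + 1) * (1 - t) - ((ℓ:ℝ) + 1)) ^ 2))) :=
          mul_le_mul_of_nonneg_left hinner hpos
      _ = 1 / (2 * (x + 1) * (1 - t)) * ((n + 1).choose (ℓ + 1) : ℝ) * (1 - t) ^ (ℓ + 1) *
          t ^ (n - (ℓ + 1)) *
          ((1 - t) * (x - ((ℓ:ℝ) + 1) + 1) + ((x + 1) * (1 - t) - ((ℓ:ℝ) + 1)) ^ 2) := by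
          rw [pow_succ]; ring
  · -- p_n ≤ p_{n-1}
    have e1 : n - n = 0 := Nat.sub_self n
    have e2 : n - (n - 1) = 1 := by omega
    have e3 : ((n - 1 : ℕ) : ℝ) = x - 1 := by
      rw [hxdef, Nat.cast_sub (by omega : 1 ≤ n)]; norm_num
    have e4 : (1 - t) ^ n = (1 - t) ^ (n - 1) * (1 - t) := by
      rw [← pow_succ, show n - 1 + 1 = n by omega]
    have hch1 : (((n + 1).choose n) : ℝ) = x + 1 := by
      rw [Nat.choose_succ_self_right, hxdef]; push_cast; ring
    have hch2 : (((n + 1).choose (n - 1)) : ℝ) * 2 = (x + 1) * x := by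
      have h := Nat.choose_succ_right_eq (n + 1) (n - 1)
      rw [show n - 1 + 1 = n by omega, show n + 1 - (n - 1) = 2 by omega] at h
      have h' := congrArg (Nat.cast (R := ℝ)) h
      push_cast at h'
      rw [hxdef]
      nlinarith [h', hch1]
    have hu : 0 ≤ (x + 1) * t - 1 := by linarith
    have hus : (x + 1) * t - 1 ≤ 1 - t := by linarith
    have h2m : 0 ≤ 2 - (x + 1) * t := by linarith
    have hin : 0 ≤ ((x + 1) * t - 1) * (2 - (x + 1) * t) + (1 - t) * ((x + 1) * t) :=
      add_nonneg (mul_nonneg hu h2m) (mul_nonneg hs.le (by positivity))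
    have key2 : 2 * ((1 - t) * ((1 - t) * (x - x + 1) + ((x + 1) * (1 - t) - x) ^ 2)) ≤
        x * (t * ((1 - t) * (x - (x - 1) + 1) + ((x + 1) * (1 - t) - (x - 1)) ^ 2)) := by
      linarith [mul_nonneg h2m hin]
    rw [pdist, pdist, if_pos (le_refl n), if_pos (show n - 1 ≤ n by omega), e1, e2, e3, e4,
      pow_zero, pow_one, ← hxdef]
    have hinner2 : (x + 1) * ((1 - t) * ((1 - t) * (x - x + 1) + ((x + 1) * (1 - t) - x) ^ 2)) ≤
        (((n + 1).choose (n - 1)) : ℝ) *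
          (t * ((1 - t) * (x - (x - 1) + 1) + ((x + 1) * (1 - t) - (x - 1)) ^ 2)) := by
      have k3 := mul_le_mul_of_nonneg_left key2 (show (0:ℝ) ≤ (x + 1) / 2 by linarith)
      calc (x + 1) * ((1 - t) * ((1 - t) * (x - x + 1) + ((x + 1) * (1 - t) - x) ^ 2))
          = (x + 1) / 2 * (2 * ((1 - t) * ((1 - t) * (x - x + 1)
            + ((x + 1) * (1 - t) - x) ^ 2))) := by ring
        _ ≤ (x + 1) / 2 * (x * (t * ((1 - t) * (x - (x - 1) + 1)
            + ((x + 1) * (1 - t) - (x - 1)) ^ 2))) := k3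
        _ = (((n + 1).choose (n - 1)) : ℝ) *
            (t * ((1 - t) * (x - (x - 1) + 1) + ((x + 1) * (1 - t) - (x - 1)) ^ 2)) := by
            linear_combination (-(t * ((1 - t) * (x - (x - 1) + 1)
              + ((x + 1) * (1 - t) - (x - 1)) ^ 2)) / 2) * hch2
    have hpos2 : (0:ℝ) ≤ 1 / (2 * (x + 1) * (1 - t)) * (1 - t) ^ (n - 1) := by positivity
    calc 1 / (2 * (x + 1) * (1 - t)) * (((n + 1).choose n) : ℝ) * ((1 - t) ^ (n - 1) * (1 - t)) *
          1 * ((1 - t) * (x - x + 1) + ((x + 1) * (1 - t) - x) ^ 2)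
        = (1 / (2 * (x + 1) * (1 - t)) * (1 - t) ^ (n - 1)) *
          ((x + 1) * ((1 - t) * ((1 - t) * (x - x + 1) + ((x + 1) * (1 - t) - x) ^ 2))) := by
          rw [hch1]; ring
      _ ≤ (1 / (2 * (x + 1) * (1 - t)) * (1 - t) ^ (n - 1)) *
          ((((n + 1).choose (n - 1)) : ℝ) *
            (t * ((1 - t) * (x - (x - 1) + 1) + ((x + 1) * (1 - t) - (x - 1)) ^ 2))) :=
          mul_le_mul_of_nonneg_left hinner2 hpos2
      _ = 1 / (2 * (x + 1) * (1 - t)) * (((n + 1).choose (n - 1)) : ℝ) * (1 - t) ^ (n - 1) * t *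
          ((1 - t) * (x - (x - 1) + 1) + ((x + 1) * (1 - t) - (x - 1)) ^ 2) := by ring
  · -- p_n ≤ p_{n+1}
    have e1 : n - n = 0 := Nat.sub_self n
    have hch1 : (((n + 1).choose n) : ℝ) = x + 1 := by
      rw [Nat.choose_succ_self_right, hxdef]; push_cast; ring
    have hu : 0 ≤ (x + 1) * t - 1 := by linarith
    have hus : (x + 1) * t - 1 ≤ 1 - t := by linarith
    have key3 : (1 - t) * (x - x + 1) + ((x + 1) * (1 - t) - x) ^ 2 ≤ (x + 1) * t * (1 - t) := by
      linarith [mul_le_mul_of_nonneg_left hus hu]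
    have h1t : (1 - t) ≠ 0 := ne_of_gt hs
    have hx1' : (x + 1) ≠ 0 := ne_of_gt hx1
    rw [pdist, pdist, if_pos (le_refl n), if_neg (show ¬ n + 1 ≤ n by omega), e1, pow_zero,
      ← hxdef]
    calc 1 / (2 * (x + 1) * (1 - t)) * (((n + 1).choose n) : ℝ) * (1 - t) ^ n * 1 *
          ((1 - t) * (x - x + 1) + ((x + 1) * (1 - t) - x) ^ 2)
        = (1 - t) ^ n / (2 * (1 - t)) *
          ((1 - t) * (x - x + 1) + ((x + 1) * (1 - t) - x) ^ 2) := by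
          rw [hch1]; field_simp
      _ ≤ (1 - t) ^ n / (2 * (1 - t)) * ((x + 1) * t * (1 - t)) :=
          mul_le_mul_of_nonneg_left key3 (by positivity)
      _ = (x + 1) * t * (1 - t) ^ n / 2 := by field_simp
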